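/- Let Q_{12}, Q_{21} ∈ W^n_1[0,1], let a ∈ [0,1], m ∈ {0,1,…,n−1}, and set m_0 := min{2m+2, n}. If q_−^{(j)}(a) = 0 for all 0 ≤ j < m, then σ_j^+(a) = (−1)^{j−1} q_−^{(j−1)}(a) for all 1 ≤ j ≤ m_0. Likewise, if q_+^{(j)}(a) = 0 for all 0 ≤ j < m, then σ_j^-(a) = (−1)^{j−1} q_+^{(j−1)}(a) for all 1 ≤ j ≤ m_0. -/

import Mathlib

open MeasureTheory Set Filter

noncomputable section

/-- The unit interval `[0,1]` as a subset of `ℝ`. -/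
def I01 : Set ℝ := Set.Icc 0 1

/-- Lebesgue measure restricted to `[0,1]`. -/
def mu01 : MeasureTheory.Measure ℝ := MeasureTheory.volume.restrict I01

/-- `f ∈ W^n_1[0,1]`: the derivatives of `f` up to order `n-1` exist and are continuous on
`[0,1]`, and the `(n-1)`-st derivative is absolutely continuous, i.e. an indefinite integral
of an integrable function (its a.e.-derivative `f⁽ⁿ⁾ ∈ L¹[0,1]`). -/
def MemW1 (n : ℕ) (f : ℝ → ℂ) : Prop :=
  ContDiffOn ℝ (n - 1 : ℕ) f I01 ∧
  ∃ g : ℝ → ℂ, MeasureTheory.IntegrableOn g I01 ∧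
    ∀ x ∈ I01, iteratedDerivWithin (n - 1) f I01 x
      = iteratedDerivWithin (n - 1) f I01 0 + ∫ t in (0:ℝ)..x, g t

/-- `Jdet a j k` is the minor `J_{(j+1)(k+1)} = a_{1,j} a_{2,k} - a_{1,k} a_{2,j}` of the
boundary coefficient matrix (`0`-based indices). -/
def Jdet (a : Fin 2 → Fin 4 → ℂ) (j k : Fin 4) : ℂ := a 0 j * a 1 k - a 0 k * a 1 j

/-- `y` satisfies the two-point boundary conditions `U_j(y) = 0`, `j = 1, 2`. -/
def SatisfiesBC (a : Fin 2 → Fin 4 → ℂ) (y : ℝ → ℂ × ℂ) : Prop :=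
  ∀ j : Fin 2, a j 0 * (y 0).1 + a j 1 * (y 0).2 + a j 2 * (y 1).1 + a j 3 * (y 1).2 = 0

/-- `y` is absolutely continuous on `[0,1]` (an indefinite integral of an integrable `g`,
which is then its a.e. derivative) and satisfies `-i B⁻¹ y' + Q y = rhs` a.e. on `[0,1]`. -/
def SolvesDirac (b₁ b₂ : ℝ) (Q12 Q21 : ℝ → ℂ) (y rhs : ℝ → ℂ × ℂ) : Prop :=
  ∃ g : ℝ → ℂ × ℂ, MeasureTheory.IntegrableOn g I01 ∧
    (∀ x ∈ I01, y x = y 0 + ∫ t in (0:ℝ)..x, g t) ∧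
    (∀ᵐ x ∂mu01,
      (-Complex.I) * (b₁ : ℂ)⁻¹ * (g x).1 + Q12 x * (y x).2 = (rhs x).1 ∧
      (-Complex.I) * (b₂ : ℂ)⁻¹ * (g x).2 + Q21 x * (y x).1 = (rhs x).2)

/-- `y` is a root function of the boundary value problem: a member of a chain
`ch 0, …, ch m` of absolutely continuous functions satisfying the boundary conditions,
with `ch 0 ≠ 0`, `L (ch 0) = λ • ch 0` a.e. and `L (ch j) = λ • ch j + ch (j-1)` a.e. -/
def IsRootFunction (b₁ b₂ : ℝ) (Q12 Q21 : ℝ → ℂ) (a : Fin 2 → Fin 4 → ℂ)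
    (y : ℝ → ℂ × ℂ) : Prop :=
  ∃ (lam : ℂ) (m : ℕ) (ch : ℕ → ℝ → ℂ × ℂ),
    (∀ j ≤ m, SatisfiesBC a (ch j)) ∧
    (∃ x ∈ I01, ch 0 x ≠ 0) ∧
    SolvesDirac b₁ b₂ Q12 Q21 (ch 0) (fun x => lam • ch 0 x) ∧
    (∀ j, 1 ≤ j → j ≤ m →
      SolvesDirac b₁ b₂ Q12 Q21 (ch j) (fun x => lam • ch j x + ch (j - 1) x)) ∧
    ∃ j ≤ m, y = ch j

/-- Completeness of the system of root functions in `L²([0,1]; ℂ²)`: the closed linear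
span of (the `L²`-classes of) all root functions is the whole space. -/
def RootSystemComplete (b₁ b₂ : ℝ) (Q12 Q21 : ℝ → ℂ) (a : Fin 2 → Fin 4 → ℂ) : Prop :=
  (Submodule.span ℂ {g : MeasureTheory.Lp (ℂ × ℂ) 2 mu01 |
    ∃ y : ℝ → ℂ × ℂ, IsRootFunction b₁ b₂ Q12 Q21 a y ∧
      (g : ℝ → ℂ × ℂ) =ᵐ[mu01] y}).topologicalClosure = ⊤

lemma uD01 : UniqueDiffOn ℝ I01 := uniqueDiffOn_Icc one_pos

lemma castle {a b : ℕ} (h : a ≤ b) : (a : WithTop ℕ∞) ≤ (b : ℕ) := by exact_mod_cast h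

lemma castle1 {a b : ℕ} (h : a + 1 ≤ b) : (a : WithTop ℕ∞) + 1 ≤ (b : ℕ) := by
  exact_mod_cast h

-- sum of iterated derivs
lemma iterSum {ι : Type*} (u : Finset ι) (f : ι → ℝ → ℂ) {i : ℕ} {A : ℝ} (hA : A ∈ I01)
    (h : ∀ j ∈ u, ContDiffOn ℝ i (f j) I01) :
    iteratedDerivWithin i (fun x => ∑ j ∈ u, f j x) I01 A
      = ∑ j ∈ u, iteratedDerivWithin i (f j) I01 A := by
  have := iteratedFDerivWithin_sum_apply (𝕜 := ℝ) uD01 hA (fun j hj => h j hj A hA)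
  rw [show (∑ j ∈ u, f j) = (fun x => ∑ j ∈ u, f j x) from by ext x; simp] at this
  simp only [iteratedDerivWithin_eq_iteratedFDerivWithin, this,
    ContinuousMultilinearMap.sum_apply]

lemma van_mul {A : ℝ} (hA : A ∈ I01) :
    ∀ (d a b : ℕ) (f g : ℝ → ℂ),
      ContDiffOn ℝ d f I01 → ContDiffOn ℝ d g I01 →
      (∀ i < a, iteratedDerivWithin i f I01 A = 0) →
      (∀ i < b, iteratedDerivWithin i g I01 A = 0) →
      ∀ i, i ≤ d → i < a + b →
        iteratedDerivWithin i (fun x => f x * g x) I01 A = 0 := by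
  intro d
  induction d with
  | zero =>
    intro a b f g hf hg vf vg i hid hiab
    interval_cases i
    simp only [iteratedDerivWithin_zero]
    rcases Nat.eq_zero_or_pos a with ha | ha
    · have hb : 0 < b := by omega
      have := vg 0 hb
      simp only [iteratedDerivWithin_zero] at this
      simp [this]
    · have := vf 0 ha
      simp only [iteratedDerivWithin_zero] at this
      simp [this]
  | succ d IH =>
    intro a b f g hf hg vf vg i hid hiab
    cases i with
    | zero =>
      simp only [iteratedDerivWithin_zero]
      rcases Nat.eq_zero_or_pos a with ha | ha
      · have hb : 0 < b := by omega
        have := vg 0 hb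
        simp only [iteratedDerivWithin_zero] at this
        simp [this]
      · have := vf 0 ha
        simp only [iteratedDerivWithin_zero] at this
        simp [this]
    | succ i =>
      have hdiff_f : ∀ y ∈ I01, DifferentiableWithinAt ℝ f I01 y := fun y hy =>
        (hf.differentiableOn (by exact_mod_cast (show d + 1 ≠ 0 by omega)) y hy)
      have hdiff_g : ∀ y ∈ I01, DifferentiableWithinAt ℝ g I01 y := fun y hy =>
        (hg.differentiableOn (by exact_mod_cast (show d + 1 ≠ 0 by omega)) y hy)
      have hEq : Set.EqOn (derivWithin (fun x => f x * g x) I01)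
          (fun x => derivWithin f I01 x * g x + f x * derivWithin g I01 x) I01 := by
        intro y hy
        exact derivWithin_fun_mul (hdiff_f y hy) (hdiff_g y hy)
      rw [iteratedDerivWithin_succ',
        iteratedDerivWithin_congr hEq hA]
      have hf' : ContDiffOn ℝ d (derivWithin f I01) I01 :=
        hf.derivWithin uD01 (castle1 (le_refl (d+1)))
      have hg' : ContDiffOn ℝ d (derivWithin g I01) I01 :=
        hg.derivWithin uD01 (castle1 (le_refl (d+1)))
      have hfd : ContDiffOn ℝ d f I01 := hf.of_le (castle (show d ≤ d + 1 by omega))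
      have hgd : ContDiffOn ℝ d g I01 := hg.of_le (castle (show d ≤ d + 1 by omega))
      have h1 : ContDiffOn ℝ i (fun x => derivWithin f I01 x * g x) I01 :=
        (hf'.of_le (castle (show i ≤ d by omega))).mul (hgd.of_le (castle (show i ≤ d by omega)))
      have h2 : ContDiffOn ℝ i (fun x => f x * derivWithin g I01 x) I01 :=
        (hfd.of_le (castle (show i ≤ d by omega))).mul (hg'.of_le (castle (show i ≤ d by omega)))
      have hadd := iteratedDerivWithin_add (n := i) hA uD01 (h1 A hA) (h2 A hA)
      have hfun : (fun x => derivWithin f I01 x * g x + f x * derivWithin g I01 x)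
          = ((fun x => derivWithin f I01 x * g x) + (fun x => f x * derivWithin g I01 x)) := rfl
      rw [hfun, hadd]
      have vf' : ∀ i' < a - 1, iteratedDerivWithin i' (derivWithin f I01) I01 A = 0 := by
        intro i' hi'
        rw [← iteratedDerivWithin_succ']
        exact vf (i' + 1) (by omega)
      have vg' : ∀ i' < b - 1, iteratedDerivWithin i' (derivWithin g I01) I01 A = 0 := by
        intro i' hi'
        rw [← iteratedDerivWithin_succ']
        exact vg (i' + 1) (by omega)
      have t1 : iteratedDerivWithin i (fun x => derivWithin f I01 x * g x) I01 A = 0 := by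
        rcases Nat.eq_zero_or_pos a with ha | ha
        · exact IH 0 (b - 1) _ g hf' hgd (by omega) (fun i' hi' => vg i' (by omega))
            i (by omega) (by omega)
        · exact IH (a - 1) b _ g hf' hgd vf' vg i (by omega) (by omega)
      have t2 : iteratedDerivWithin i (fun x => f x * derivWithin g I01 x) I01 A = 0 := by
        rcases Nat.eq_zero_or_pos b with hb | hb
        · exact IH (a - 1) 0 f _ hfd hg' (fun i' hi' => vf i' (by omega)) (by omega)
            i (by omega) (by omega)
        · exact IH a (b - 1) f _ hfd hg' vf vg' i (by omega) (by omega)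
      rw [t1, t2, add_zero]

def barSeq (q r : ℝ → ℂ) : ℕ → ℝ → ℂ
  | 0 => q
  | (k+1) => fun x => -(derivWithin (barSeq q r k) I01 x)
      - r x * ∑ j ∈ (Finset.range k).attach,
          barSeq q r j.1 x * barSeq q r (k - 1 - j.1) x
  termination_by k => k
  decreasing_by
  · omega
  · have := j.2; simp only [Finset.mem_range] at this; omega
  · omega

lemma barSeq_zero (q r : ℝ → ℂ) : barSeq q r 0 = q := by rw [barSeq]

lemma barSeq_succ (q r : ℝ → ℂ) (k : ℕ) :
    barSeq q r (k+1) = fun x => -(derivWithin (barSeq q r k) I01 x)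
      - r x * ∑ j ∈ Finset.range k, barSeq q r j x * barSeq q r (k - 1 - j) x := by
  rw [barSeq]
  funext x
  congr 1
  congr 1
  exact Finset.sum_attach (Finset.range k) (fun t => barSeq q r t x * barSeq q r (k - 1 - t) x)

lemma bar_smooth {q r : ℝ → ℂ} {N : ℕ} (hq : ContDiffOn ℝ N q I01)
    (hr : ContDiffOn ℝ N r I01) :
    ∀ k, k ≤ N → ContDiffOn ℝ ((N - k : ℕ)) (barSeq q r k) I01 := by
  intro k
  induction k using Nat.strong_induction_on with
  | _ k IH =>
    intro hk
    match k with
    | 0 => rw [barSeq_zero]; simpa using hq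
    | (k+1) =>
      have h1 : ContDiffOn ℝ ((N - (k+1) : ℕ)) (derivWithin (barSeq q r k) I01) I01 :=
        (IH k (by omega) (by omega)).derivWithin uD01 (castle1 (show N - (k+1) + 1 ≤ N - k by omega))
      have h2 : ContDiffOn ℝ ((N - (k+1) : ℕ))
          (fun x => r x * ∑ j ∈ Finset.range k, barSeq q r j x * barSeq q r (k - 1 - j) x)
          I01 := by
        refine (hr.of_le (castle (by omega))).mul (ContDiffOn.sum ?_)
        intro j hj
        have hj' : j < k := Finset.mem_range.mp hj
        exact ((IH j (by omega) (by omega)).of_le (castle (by omega))).mul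
          ((IH (k - 1 - j) (by omega) (by omega)).of_le (castle (by omega)))
      rw [barSeq_succ]
      exact h1.neg.sub h2

lemma sigma_eval
    (n : ℕ) (hn : 1 ≤ n) (q r : ℝ → ℂ)
    (hq : ContDiffOn ℝ ((n - 1 : ℕ)) q I01) (hr : ContDiffOn ℝ ((n - 1 : ℕ)) r I01)
    (σ : ℕ → ℝ → ℂ)
    (hσ1 : ∀ x ∈ I01, σ 1 x = q x)
    (hrec : ∀ k, 1 ≤ k → k + 1 ≤ n → ∀ x ∈ I01,
      σ (k + 1) x = -(derivWithin (σ k) I01 x)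
        - r x * ∑ j ∈ Finset.Icc 1 (k - 1), σ j x * σ (k - j) x)
    (A : ℝ) (hA : A ∈ I01) (m : ℕ) (hm : m < n)
    (hvan : ∀ j < m, iteratedDerivWithin j q I01 A = 0) :
    ∀ j, 1 ≤ j → j ≤ min (2 * m + 2) n →
      σ j A = (-1) ^ (j - 1) * iteratedDerivWithin (j - 1) q I01 A := by
  set N := n - 1 with hN
  -- agreement of σ with the canonical sequence
  have agree : ∀ k, k + 1 ≤ n → ∀ x ∈ I01, σ (k + 1) x = barSeq q r k x := by
    intro k
    induction k using Nat.strong_induction_on with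
    | _ k IH =>
      intro hk x hx
      match k with
      | 0 => rw [barSeq_zero]; exact hσ1 x hx
      | (k+1) =>
        have hrec' := hrec (k + 1) (by omega) (by omega) x hx
        rw [hrec', barSeq_succ]
        have hd : derivWithin (σ (k + 1)) I01 x = derivWithin (barSeq q r k) I01 x :=
          derivWithin_congr (fun y hy => IH k (by omega) (by omega) y hy)
            (IH k (by omega) (by omega) x hx)
        rw [hd]
        congr 1
        congr 1
        have hIcc : Finset.Icc 1 (k + 1 - 1) = Finset.Ico 1 (k + 1) := by
          rw [Finset.Ico_add_one_right_eq_Icc]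
          congr 1
        rw [hIcc, Finset.sum_Ico_eq_sum_range]
        refine Finset.sum_congr (by congr 1) ?_
        intro i hi
        have hik : i < k := by
          simpa using hi
        have e1 : σ (1 + i) x = barSeq q r i x := by
          have := IH i (by omega) (by omega) x hx
          rw [show 1 + i = i + 1 by omega]; exact this
        have e2 : σ (k + 1 - (1 + i)) x = barSeq q r (k - 1 - i) x := by
          have := IH (k - 1 - i) (by omega) (by omega) x hx
          rw [show k + 1 - (1 + i) = (k - 1 - i) + 1 by omega]; exact this
        rw [e1, e2]
  -- key evaluation of the canonical sequence at A
  have key : ∀ k, ∀ p, k + 1 + p ≤ min (2 * m + 2) n →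
      iteratedDerivWithin p (barSeq q r k) I01 A
        = (-1) ^ k * iteratedDerivWithin (k + p) q I01 A := by
    intro k
    induction k using Nat.strong_induction_on with
    | _ k IH =>
      intro p hp
      match k with
      | 0 => rw [barSeq_zero]; simp
      | (k+1) =>
        have hm0n : min (2 * m + 2) n ≤ n := min_le_right _ _
        have hm0m : min (2 * m + 2) n ≤ 2 * m + 2 := min_le_left _ _
        rw [barSeq_succ]
        set F : ℝ → ℂ := fun x => -(derivWithin (barSeq q r k) I01 x) with hF
        set G : ℝ → ℂ := fun x =>
          r x * ∑ j ∈ Finset.range k, barSeq q r j x * barSeq q r (k - 1 - j) x with hG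
        have hFsm : ContDiffOn ℝ p F I01 := by
          refine ContDiffOn.neg ?_
          refine ((bar_smooth hq hr k (by omega)).derivWithin uD01
            (castle1 (show (N - k - 1) + 1 ≤ N - k by omega))).of_le (castle (by omega))
        have hGsm : ContDiffOn ℝ p G I01 := by
          refine ((hr.of_le (castle (by omega))).mul (ContDiffOn.sum ?_))
          intro j hj
          have hjk : j < k := Finset.mem_range.mp hj
          exact ((bar_smooth hq hr j (by omega)).of_le (castle (by omega))).mul
            (((bar_smooth hq hr (k - 1 - j) (by omega)).of_le (castle (by omega))))
        have hsplit : iteratedDerivWithin p (fun x => F x - G x) I01 A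
            = iteratedDerivWithin p F I01 A - iteratedDerivWithin p G I01 A := by
          exact iteratedDerivWithin_sub hA uD01 (hFsm A hA) (hGsm A hA)
        rw [hsplit]
        have hFval : iteratedDerivWithin p F I01 A
            = (-1) ^ (k + 1) * iteratedDerivWithin (k + 1 + p) q I01 A := by
          rw [hF]
          rw [show (fun x => -(derivWithin (barSeq q r k) I01 x)) = -(derivWithin (barSeq q r k) I01) from rfl,
            iteratedDerivWithin_neg, ← iteratedDerivWithin_succ']
          rw [IH k (by omega) (p + 1) (by omega)]
          rw [show k + (p + 1) = k + 1 + p by omega]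
          ring
        have hGval : iteratedDerivWithin p G I01 A = 0 := by
          rw [hG]
          have hvanS : ∀ i < p + 1, iteratedDerivWithin i
              (fun x => ∑ j ∈ Finset.range k,
                barSeq q r j x * barSeq q r (k - 1 - j) x) I01 A = 0 := by
            intro i hi
            rw [iterSum _ _ hA (fun j hj => by
              have hjk : j < k := Finset.mem_range.mp hj
              exact ((bar_smooth hq hr j (by omega)).of_le (castle (by omega))).mul
                (((bar_smooth hq hr (k - 1 - j) (by omega)).of_le (castle (by omega)))))]
            refine Finset.sum_eq_zero ?_
            intro j hj
            have hjk : j < k := Finset.mem_range.mp hj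
            have vf : ∀ i' < m - j, iteratedDerivWithin i' (barSeq q r j) I01 A = 0 := by
              intro i' hi'
              rw [IH j (by omega) i' (by omega), hvan (j + i') (by omega)]
              ring
            have vg : ∀ i' < m - (k - 1 - j),
                iteratedDerivWithin i' (barSeq q r (k - 1 - j)) I01 A = 0 := by
              intro i' hi'
              rw [IH (k - 1 - j) (by omega) i' (by omega), hvan ((k - 1 - j) + i') (by omega)]
              ring
            exact van_mul hA i (m - j) (m - (k - 1 - j)) _ _
              ((bar_smooth hq hr j (by omega)).of_le (castle (by omega)))
              ((bar_smooth hq hr (k - 1 - j) (by omega)).of_le (castle (by omega)))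
              vf vg i (le_refl i) (by omega)
          exact van_mul hA p 0 (p + 1) r _
            (hr.of_le (castle (by omega)))
            (ContDiffOn.sum (fun j hj => by
              have hjk : j < k := Finset.mem_range.mp hj
              exact ((bar_smooth hq hr j (by omega)).of_le (castle (by omega))).mul
                (((bar_smooth hq hr (k - 1 - j) (by omega)).of_le (castle (by omega))))))
            (by omega) hvanS p (le_refl p) (by omega)
        rw [hFval, hGval, sub_zero]
  intro j hj1 hj2
  have := agree (j - 1) (by omega) A hA
  rw [show (j - 1) + 1 = j by omega] at this
  have h0 : iteratedDerivWithin 0 (barSeq q r (j - 1)) I01 A = barSeq q r (j - 1) A := by simp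
  rw [this, ← h0, key (j - 1) 0 (by omega), show j - 1 + 0 = j - 1 by omega]

/-- Lemma: `σ_j^±(a)` under vanishing of low-order derivatives. -/
theorem statement_11
    (b₁ b₂ : ℝ) (hb₁ : b₁ < 0) (hb₂ : 0 < b₂)
    (Q12 Q21 : ℝ → ℂ)
    (n : ℕ) (hn : 1 ≤ n)
    (hQ12 : MemW1 n Q12) (hQ21 : MemW1 n Q21)
    (qp qm : ℝ → ℂ)
    (hqp : qp = fun x => -Complex.I * (b₁ : ℂ) * Q12 x)
    (hqm : qm = fun x => -Complex.I * (b₂ : ℂ) * Q21 x)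
    (σp σm : ℕ → ℝ → ℂ)
    (hσp1 : ∀ x ∈ I01, σp 1 x = qm x)
    (hσm1 : ∀ x ∈ I01, σm 1 x = qp x)
    (hσpRec : ∀ k, 1 ≤ k → k + 1 ≤ n → ∀ x ∈ I01,
      σp (k + 1) x = -(derivWithin (σp k) I01 x)
        - qp x * ∑ j ∈ Finset.Icc 1 (k - 1), σp j x * σp (k - j) x)
    (hσmRec : ∀ k, 1 ≤ k → k + 1 ≤ n → ∀ x ∈ I01,
      σm (k + 1) x = -(derivWithin (σm k) I01 x)
        - qm x * ∑ j ∈ Finset.Icc 1 (k - 1), σm j x * σm (k - j) x)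
    (A : ℝ) (hA : A ∈ I01) (m : ℕ) (hm : m < n)
    (m₀ : ℕ) (hm₀ : m₀ = min (2 * m + 2) n) :
    ((∀ j < m, iteratedDerivWithin j qm I01 A = 0) →
      ∀ j, 1 ≤ j → j ≤ m₀ →
        σp j A = (-1) ^ (j - 1) * iteratedDerivWithin (j - 1) qm I01 A) ∧
    ((∀ j < m, iteratedDerivWithin j qp I01 A = 0) →
      ∀ j, 1 ≤ j → j ≤ m₀ →
        σm j A = (-1) ^ (j - 1) * iteratedDerivWithin (j - 1) qp I01 A) := by
  subst hm₀ hqp hqm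
  have hqmC : ContDiffOn ℝ ((n - 1 : ℕ)) (fun x => -Complex.I * (b₂ : ℂ) * Q21 x) I01 :=
    (contDiffOn_const (c := -Complex.I * (b₂ : ℂ))).mul hQ21.1
  have hqpC : ContDiffOn ℝ ((n - 1 : ℕ)) (fun x => -Complex.I * (b₁ : ℂ) * Q12 x) I01 :=
    (contDiffOn_const (c := -Complex.I * (b₁ : ℂ))).mul hQ12.1
  constructor
  · intro hvan
    exact sigma_eval n hn _ _ hqmC hqpC σp hσp1 hσpRec A hA m hm hvan
  · intro hvan
    exact sigma_eval n hn _ _ hqpC hqmC σm hσm1 hσmRec A hA m hm hvan
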